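/- Let G_r(Γ, 0) := ({z ∈ ℂⁿ : |z| > r, z/|z| ∈ Γ} ⊔ Γ∞) × {t ∈ ℂ^m : |t| < 1/r} for r > 0 and Γ ⊂ S^{2n-1} open, and let Ũ ⊂ ℂⁿ × ℂ^m be a bounded open subset. Then the open set U := G_r(Γ, 0) ∪ Ũ ⊂ 𝔻_{ℂⁿ} × ℂ^m satisfies N^L_∞(U) = U ∩ X_∞, and hence U is regular at ∞. -/

import Mathlib

open Metric Filter Topology

noncomputable section

/-- `ℂⁿ` with the Euclidean norm. -/
abbrev Cn (n : ℕ) := EuclideanSpace ℂ (Fin n)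

/-- The radial compactification `𝔻_E` of `E = ℂⁿ`, as the disjoint union of `ℂⁿ`
and a copy `S^{2n-1}∞` of the unit sphere. -/
abbrev DE (n : ℕ) := Cn n ⊕ Metric.sphere (0 : Cn n) 1

/-- The bijection `φ : D → 𝔻_E`, `φ(z) = z/(1-|z|)` on the open ball and `φ(z) = z∞`
on the boundary sphere. -/
noncomputable def phiD (n : ℕ) : Metric.closedBall (0 : Cn n) 1 → DE n :=
  fun z =>
    if h : ‖(z : Cn n)‖ < 1 then
      Sum.inl ((1 - ‖(z : Cn n)‖)⁻¹ • (z : Cn n))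
    else
      Sum.inr ⟨(z : Cn n), by
        have h1 : ‖(z : Cn n)‖ ≤ 1 := mem_closedBall_zero_iff.mp z.2
        exact mem_sphere_zero_iff_norm.mpr (le_antisymm h1 (not_lt.mp h))⟩

/-- The topology on `𝔻_E`, transported from the closed unit ball via `φ`
(so that `φ` is a homeomorphism). -/
instance DEtop (n : ℕ) : TopologicalSpace (DE n) :=
  TopologicalSpace.coinduced (phiD n) inferInstance

set_option maxHeartbeats 2000000

lemma phi_cont (n : ℕ) : Continuous (phiD n) := continuous_coinduced_rng

noncomputable def psiD (n : ℕ) : DE n → Metric.closedBall (0 : Cn n) 1 :=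
  fun d => match d with
  | Sum.inl z => ⟨(1 + ‖z‖)⁻¹ • z, by
      rw [mem_closedBall_zero_iff, norm_smul, Real.norm_eq_abs,
        abs_of_nonneg (by positivity)]
      rw [inv_mul_le_iff₀ (by positivity), mul_one]
      linarith [norm_nonneg z]⟩
  | Sum.inr x => ⟨x, by
      rw [mem_closedBall_zero_iff, mem_sphere_zero_iff_norm.mp x.2]⟩

lemma psi_phi (n : ℕ) : ∀ w, psiD n (phiD n w) = w := by
  intro w
  by_cases h : ‖(w : Cn n)‖ < 1
  · have h1 : (0:ℝ) < 1 - ‖(w : Cn n)‖ := by linarith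
    simp only [phiD, dif_pos h, psiD]
    apply Subtype.ext
    show (1 + ‖(1 - ‖(w:Cn n)‖)⁻¹ • (w:Cn n)‖)⁻¹ • ((1 - ‖(w:Cn n)‖)⁻¹ • (w:Cn n)) = (w:Cn n)
    rw [norm_smul, Real.norm_eq_abs, abs_of_nonneg (by positivity)]
    have h2 : 1 + (1 - ‖(w:Cn n)‖)⁻¹ * ‖(w:Cn n)‖ = (1 - ‖(w:Cn n)‖)⁻¹ := by
      field_simp
      ring
    rw [h2, inv_inv, smul_smul, mul_inv_cancel₀ (by positivity), one_smul]
  · simp only [phiD, dif_neg h, psiD]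

lemma psi_cont (n : ℕ) : Continuous (psiD n) := by
  rw [continuous_coinduced_dom]
  have : psiD n ∘ phiD n = id := funext (psi_phi n)
  rw [this]
  exact continuous_id

lemma phiD_smul {n : ℕ} (ζ : Metric.sphere (0 : Cn n) 1) {σ : ℝ} (hσ : 0 ≤ σ) :
    phiD n ⟨(σ/(1+σ)) • (ζ : Cn n), by
      rw [mem_closedBall_zero_iff, norm_smul, Real.norm_eq_abs,
        abs_of_nonneg (by positivity), mem_sphere_zero_iff_norm.mp ζ.2, mul_one]
      rw [div_le_one (by positivity)]; linarith⟩ = Sum.inl (σ • (ζ : Cn n)) := by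
  have h1 : (0:ℝ) < 1 + σ := by linarith
  have hnorm : ‖(σ/(1+σ)) • (ζ : Cn n)‖ = σ/(1+σ) := by
    rw [norm_smul, Real.norm_eq_abs, abs_of_nonneg (by positivity),
      mem_sphere_zero_iff_norm.mp ζ.2, mul_one]
  have hlt : ‖(σ/(1+σ)) • (ζ : Cn n)‖ < 1 := by
    rw [hnorm, div_lt_one h1]; linarith
  simp only [phiD, dif_pos hlt]
  congr 1
  rw [hnorm, smul_smul]
  congr 1
  field_simp
  ring

lemma tendsto_inl_smul {n : ℕ} (ζ : Metric.sphere (0 : Cn n) 1) {s : ℕ → ℝ}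
    (hs : Tendsto s atTop atTop) :
    Tendsto (fun k => (Sum.inl (s k • (ζ : Cn n)) : DE n)) atTop
      (𝓝 (Sum.inr ζ)) := by
  set σ : ℕ → ℝ := fun k => max (s k) 0 with hσdef
  have hσ0 : ∀ k, 0 ≤ σ k := fun k => le_max_right _ _
  have hσtop : Tendsto σ atTop atTop := tendsto_atTop_mono (fun k => le_max_left _ _) hs
  -- the points in the closed ball
  set w : ℕ → (Metric.closedBall (0 : Cn n) 1) := fun k =>
    ⟨(σ k/(1+σ k)) • (ζ : Cn n), by
      rw [mem_closedBall_zero_iff, norm_smul, Real.norm_eq_abs,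
        abs_of_nonneg (by positivity), mem_sphere_zero_iff_norm.mp ζ.2, mul_one]
      rw [div_le_one (by positivity)]; linarith [hσ0 k]⟩ with hwdef
  have hwlim : Tendsto w atTop (𝓝 ⟨(ζ : Cn n), by
      rw [mem_closedBall_zero_iff, mem_sphere_zero_iff_norm.mp ζ.2]⟩) := by
    rw [tendsto_subtype_rng]
    have h1 : Tendsto (fun k => σ k / (1 + σ k)) atTop (𝓝 1) := by
      have h2 : Tendsto (fun k => (1 + σ k)) atTop atTop :=
        tendsto_atTop_add_const_left _ 1 hσtop
      have h3 : Tendsto (fun k => (1 + σ k)⁻¹) atTop (𝓝 0) := h2.inv_tendsto_atTop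
      have h4 : Tendsto (fun k => 1 - (1 + σ k)⁻¹) atTop (𝓝 (1 - 0)) :=
        tendsto_const_nhds.sub h3
      rw [sub_zero] at h4
      refine h4.congr fun k => ?_
      have : (0:ℝ) < 1 + σ k := by linarith [hσ0 k]
      field_simp
      ring
    have := h1.smul_const (ζ : Cn n)
    rw [one_smul] at this
    exact this
  have hphi := ((phi_cont n).tendsto _).comp hwlim
  have hval : phiD n ⟨(ζ : Cn n), by
      rw [mem_closedBall_zero_iff, mem_sphere_zero_iff_norm.mp ζ.2]⟩ = Sum.inr ζ := by
    have hn : ¬ ‖(ζ : Cn n)‖ < 1 := by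
      rw [mem_sphere_zero_iff_norm.mp ζ.2]; exact lt_irrefl 1
    simp only [phiD, dif_neg hn]
  rw [hval] at hphi
  refine hphi.congr' ?_
  filter_upwards [hs.eventually_ge_atTop 0] with k hk
  have hσeq : σ k = s k := max_eq_left hk
  show phiD n (w k) = Sum.inl (s k • (ζ : Cn n))
  rw [hwdef]
  simp only
  rw [phiD_smul ζ (hσ0 k), hσeq]

lemma isOpen_far {n : ℕ} (M : ℝ) (hM : 0 ≤ M) :
    IsOpen {d : DE n | ∀ z : Cn n, d = Sum.inl z → M < ‖z‖} := by
  rw [isOpen_coinduced]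
  have hpre : phiD n ⁻¹' {d : DE n | ∀ z : Cn n, d = Sum.inl z → M < ‖z‖} =
      {w : Metric.closedBall (0 : Cn n) 1 | M / (1 + M) < ‖(w : Cn n)‖} := by
    ext w
    simp only [Set.mem_preimage, Set.mem_setOf_eq]
    by_cases h : ‖(w : Cn n)‖ < 1
    · have h1 : (0:ℝ) < 1 - ‖(w : Cn n)‖ := by linarith
      simp only [phiD, dif_pos h]
      constructor
      · intro hz
        have := hz _ rfl
        rw [norm_smul, Real.norm_eq_abs, abs_of_nonneg (by positivity)] at this
        rw [div_lt_iff₀ (by linarith [norm_nonneg (w : Cn n)] : (0:ℝ) < 1 + M)]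
        rw [lt_inv_mul_iff₀ h1] at this
        nlinarith
      · intro hw z hz
        injection hz with hz
        rw [← hz, norm_smul, Real.norm_eq_abs, abs_of_nonneg (by positivity)]
        rw [lt_inv_mul_iff₀ h1]
        rw [div_lt_iff₀ (by linarith : (0:ℝ) < 1 + M)] at hw
        nlinarith
    · have h1 : ‖(w : Cn n)‖ = 1 :=
        le_antisymm (mem_closedBall_zero_iff.mp w.2) (not_lt.mp h)
      simp only [phiD, dif_neg h]
      constructor
      · intro _
        rw [h1, div_lt_one (by linarith)]; linarith
      · intro _ z hz
        exact absurd hz (by simp)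
  rw [hpre]
  exact isOpen_lt continuous_const (continuous_norm.comp continuous_subtype_val)

lemma smul_sphere_eq {n : ℕ} (ζ x : Metric.sphere (0 : Cn n) 1) {s s' : ℝ}
    (hs : 0 < s) (hs' : 0 < s') (h : s • (ζ : Cn n) = s' • (x : Cn n)) :
    s = s' ∧ ζ = x := by
  have hnorm : s = s' := by
    have := congrArg norm h
    rw [norm_smul, norm_smul, Real.norm_eq_abs, Real.norm_eq_abs,
      abs_of_pos hs, abs_of_pos hs', mem_sphere_zero_iff_norm.mp ζ.2,
      mem_sphere_zero_iff_norm.mp x.2, mul_one, mul_one] at this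
    exact this
  refine ⟨hnorm, ?_⟩
  rw [hnorm] at h
  have := smul_right_injective (Cn n) (ne_of_gt hs') h
  exact Subtype.ext this

/-- The space of holomorphic parameters `T = ℂᵐ`. -/
abbrev Tm (m : ℕ) := EuclideanSpace ℂ (Fin m)

/-- The partial radial compactification `X̂ = 𝔻_E × T`. -/
abbrev Xhat (n m : ℕ) := DE n × Tm m

/-- The set at infinity `X_∞ = X̂ ∖ X`. -/
def Xinf (n m : ℕ) : Set (Xhat n m) := {p | ∃ x t, p = (Sum.inr x, t)}

/-- The finite part `X = E × T` inside `X̂`. -/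
def finiteX (n m : ℕ) : Set (Xhat n m) := {p | ∃ z t, p = (Sum.inl z, t)}

/-- `clos¹_∞(A)`: the set of points `(z∞, t) ∈ X_∞` which are limits of sequences
`(z_k, t_k) ∈ A ∩ X` with `|z_{k+1}|/|z_k| → 1`. -/
def closOneInf {n m : ℕ} (A : Set (Xhat n m)) : Set (Xhat n m) :=
  {p | p ∈ Xinf n m ∧ ∃ (z : ℕ → Cn n) (ts : ℕ → Tm m),
    (∀ k, ((Sum.inl (z k) : DE n), ts k) ∈ A) ∧
    Tendsto (fun k => ((Sum.inl (z k) : DE n), ts k)) atTop (nhds p) ∧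
    Tendsto (fun k => ‖z (k + 1)‖ / ‖z k‖) atTop (nhds 1)}

/-- `N¹_∞(A) := X_∞ ∖ clos¹_∞(X ∖ A)`. -/
def NOneInf {n m : ℕ} (A : Set (Xhat n m)) : Set (Xhat n m) :=
  Xinf n m \ closOneInf (finiteX n m \ A)

/-- An open subset `U ⊂ X̂` is regular at `∞` if `N¹_∞(U) = U ∩ X_∞`. -/
def RegularAtInf {n m : ℕ} (U : Set (Xhat n m)) : Prop :=
  NOneInf U = U ∩ Xinf n m

/-- `N^L_∞(A)`: points `(ζ∞, t) ∈ X_∞` lying in the closure in `X̂` of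
`(ℝ₊ζ × {t}) ∩ A`. -/
def NLInf {n m : ℕ} (A : Set (Xhat n m)) : Set (Xhat n m) :=
  {p | ∃ (ζ : Metric.sphere (0 : Cn n) 1) (t : Tm m), p = (Sum.inr ζ, t) ∧
    p ∈ closure ({q : Xhat n m | ∃ r : ℝ, 0 < r ∧
      q = (Sum.inl (r • (ζ : Cn n)), t)} ∩ A)}

/-- The conical neighborhood `G_r(Γ, 0) ⊂ X̂`: the product of
`({z : |z| > r, z/|z| ∈ Γ} ⊔ Γ∞)` with `{t : |t| < 1/r}` (a point `z` with
`|z| > r > 0` and `z/|z| ∈ Γ` being written as `z = s • x` with `s = |z| > r`,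
`x ∈ Γ`). -/
def Gcone {n m : ℕ} (r : ℝ) (Γ : Set (Metric.sphere (0 : Cn n) 1)) :
    Set (Xhat n m) :=
  {p | (∃ x ∈ Γ, ∃ s : ℝ, r < s ∧ 0 < s ∧ p.1 = Sum.inl (s • (x : Cn n))) ∨
        (∃ x ∈ Γ, p.1 = Sum.inr x)} ∩ {p | ‖p.2‖ < r⁻¹}

/-- For `r > 0`, `Γ ⊂ S^{2n-1}` open and `Ũ ⊂ ℂⁿ × ℂᵐ` a bounded open subset, the
open set `U := G_r(Γ, 0) ∪ Ũ ⊂ 𝔻_{ℂⁿ} × ℂᵐ` satisfies `N^L_∞(U) = U ∩ X_∞`,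
and hence `U` is regular at `∞`. -/
theorem Gcone_union_bounded_regular {n m : ℕ} (r : ℝ) (hr : 0 < r)
    (Γ : Set (Metric.sphere (0 : Cn n) 1)) (hΓ : IsOpen Γ)
    (Utilde : Set (Cn n × Tm m)) (hU : IsOpen Utilde)
    (hb : Bornology.IsBounded Utilde) :
    NLInf (Gcone r Γ ∪ {p : Xhat n m | ∃ q ∈ Utilde, p = (Sum.inl q.1, q.2)}) =
        (Gcone r Γ ∪ {p : Xhat n m | ∃ q ∈ Utilde, p = (Sum.inl q.1, q.2)}) ∩
          Xinf n m ∧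
      RegularAtInf
        (Gcone r Γ ∪ {p : Xhat n m | ∃ q ∈ Utilde, p = (Sum.inl q.1, q.2)}) := by
  set U' : Set (Xhat n m) := {p : Xhat n m | ∃ q ∈ Utilde, p = (Sum.inl q.1, q.2)}
    with hU'def
  set U : Set (Xhat n m) := Gcone r Γ ∪ U' with hUdef
  obtain ⟨M0, hM0⟩ := hb.subset_closedBall 0
  set M : ℝ := max M0 0 with hMdef
  have hM : 0 ≤ M := le_max_right _ _
  have hM0M : M0 ≤ M := le_max_left _ _
  -- extracting data from membership at infinity
  have hUinf : ∀ (ζ : Metric.sphere (0 : Cn n) 1) (t : Tm m),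
      ((Sum.inr ζ : DE n), t) ∈ U → ζ ∈ Γ ∧ ‖t‖ < r⁻¹ := by
    rintro ζ t (⟨hor, hnt⟩ | ⟨q, hq, heq⟩)
    · rcases hor with ⟨x, hx, s, _, _, h1⟩ | ⟨x, hx, h1⟩
      · exact absurd h1 (by simp)
      · obtain rfl : ζ = x := Sum.inr.inj h1
        exact ⟨hx, hnt⟩
    · exact absurd (congrArg Prod.fst heq) (by simp)
  -- Part 1 : NLInf U = U ∩ Xinf
  have hNL : NLInf U = U ∩ Xinf n m := by
    apply Set.Subset.antisymm
    · rintro p ⟨ζ, t, rfl, hcl⟩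
      have hW : IsOpen ({d : DE n | ∀ z : Cn n, d = Sum.inl z → M < ‖z‖} ×ˢ
          (Set.univ : Set (Tm m))) :=
        (isOpen_far M hM).prod isOpen_univ
      have hpW : ((Sum.inr ζ : DE n), t) ∈
          ({d : DE n | ∀ z : Cn n, d = Sum.inl z → M < ‖z‖} ×ˢ
          (Set.univ : Set (Tm m))) :=
        ⟨fun z hz => absurd hz (by simp), trivial⟩
      obtain ⟨q, hqW, hqS⟩ := _root_.mem_closure_iff.mp hcl _ hW hpW
      obtain ⟨⟨ρ, hρ, rfl⟩, hqU⟩ := hqS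
      have hρζ : M < ‖ρ • (ζ : Cn n)‖ := hqW.1 _ rfl
      have hqG : ((Sum.inl (ρ • (ζ : Cn n)) : DE n), t) ∈ Gcone r Γ := by
        rcases hqU with h | ⟨qq, hqq, heq⟩
        · exact h
        · exfalso
          have h1 : Sum.inl (ρ • (ζ : Cn n)) = (Sum.inl qq.1 : DE n) :=
            congrArg Prod.fst heq
          have h2 : ρ • (ζ : Cn n) = qq.1 := Sum.inl.inj h1
          have h3 : ‖qq‖ ≤ M0 := mem_closedBall_zero_iff.mp (hM0 hqq)
          have h4 : ‖qq.1‖ ≤ ‖qq‖ := norm_fst_le qq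
          rw [← h2] at h4
          linarith
      obtain ⟨hor, hnt⟩ := hqG
      rcases hor with ⟨x, hx, s, hsr, hs0, h1⟩ | ⟨x, hx, h1⟩
      · have h2 : ρ • (ζ : Cn n) = s • (x : Cn n) := Sum.inl.inj h1
        obtain ⟨rfl, rfl⟩ := smul_sphere_eq ζ x hρ hs0 h2
        exact ⟨Or.inl ⟨Or.inr ⟨ζ, hx, rfl⟩, hnt⟩, ⟨ζ, t, rfl⟩⟩
      · exact absurd h1 (by simp)
    · rintro p ⟨hpU, ζ, t, rfl⟩
      obtain ⟨hζΓ, htr⟩ := hUinf ζ t hpU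
      refine ⟨ζ, t, rfl, ?_⟩
      have hstop : Tendsto (fun k : ℕ => r + 1 + (k : ℝ)) atTop atTop :=
        tendsto_atTop_add_const_left _ _ tendsto_natCast_atTop_atTop
      have htend : Tendsto
          (fun k : ℕ => ((Sum.inl ((r + 1 + (k : ℝ)) • (ζ : Cn n)) : DE n), t))
          atTop (𝓝 ((Sum.inr ζ : DE n), t)) :=
        (tendsto_inl_smul ζ hstop).prodMk_nhds tendsto_const_nhds
      refine mem_closure_of_tendsto htend (Eventually.of_forall fun k => ?_)
      have hk0 : (0:ℝ) < r + 1 + (k : ℝ) := by positivity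
      refine ⟨⟨r + 1 + (k : ℝ), hk0, rfl⟩, Or.inl ⟨Or.inl ⟨ζ, hζΓ,
        r + 1 + (k : ℝ), by push_cast; linarith, hk0, rfl⟩, htr⟩⟩
  refine ⟨hNL, ?_⟩
  -- Part 2 : regularity
  apply Set.Subset.antisymm
  · -- N¹∞ U ⊆ U ∩ Xinf
    rintro p ⟨hpXinf, hnc⟩
    obtain ⟨ζ, t, rfl⟩ := hpXinf
    refine ⟨?_, ⟨ζ, t, rfl⟩⟩
    by_contra hpU
    apply hnc
    set c : ℝ := M + r + 1 with hcdef
    have hc0 : (0:ℝ) < c := by positivity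
    refine ⟨⟨ζ, t, rfl⟩, fun k => ((k : ℝ) + c) • (ζ : Cn n), fun _ => t,
      fun k => ⟨⟨_, _, rfl⟩, ?_⟩, ?_, ?_⟩
    · -- not in U
      intro hkU
      have hkc : (0:ℝ) < (k : ℝ) + c := by positivity
      rcases hkU with ⟨hor, hnt⟩ | ⟨q, hq, heq⟩
      · rcases hor with ⟨x, hx, s, hsr, hs0, h1⟩ | ⟨x, hx, h1⟩
        · have h2 : ((k : ℝ) + c) • (ζ : Cn n) = s • (x : Cn n) := Sum.inl.inj h1
          obtain ⟨rfl, rfl⟩ := smul_sphere_eq ζ x hkc hs0 h2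
          exact hpU (Or.inl ⟨Or.inr ⟨ζ, hx, rfl⟩, hnt⟩)
        · exact absurd h1 (by simp)
      · have h1 : ((k : ℝ) + c) • (ζ : Cn n) = q.1 :=
          Sum.inl.inj (congrArg Prod.fst heq)
        have h3 : ‖q‖ ≤ M0 := mem_closedBall_zero_iff.mp (hM0 hq)
        have h4 : ‖q.1‖ ≤ ‖q‖ := norm_fst_le q
        have h5 : ‖((k : ℝ) + c) • (ζ : Cn n)‖ = (k : ℝ) + c := by
          rw [norm_smul, Real.norm_eq_abs, abs_of_pos hkc,
            mem_sphere_zero_iff_norm.mp ζ.2, mul_one]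
        rw [← h1, h5] at h4
        have : (k : ℝ) + c ≤ M := le_trans h4 (le_trans h3 hM0M)
        have hk0 : (0:ℝ) ≤ (k : ℝ) := Nat.cast_nonneg k
        linarith
    · -- tendsto
      have hstop : Tendsto (fun k : ℕ => (k : ℝ) + c) atTop atTop :=
        tendsto_atTop_add_const_right _ _ tendsto_natCast_atTop_atTop
      exact (tendsto_inl_smul ζ hstop).prodMk_nhds tendsto_const_nhds
    · -- ratio tendsto 1
      have hbase : Tendsto (fun k : ℕ => 1 + ((k : ℝ) + c)⁻¹) atTop (𝓝 (1 + 0)) :=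
        tendsto_const_nhds.add
          (tendsto_atTop_add_const_right _ _ tendsto_natCast_atTop_atTop).inv_tendsto_atTop
      rw [add_zero] at hbase
      refine hbase.congr fun k => ?_
      have hkc : (0:ℝ) < (k : ℝ) + c := by positivity
      have hkc1 : (0:ℝ) < ((k:ℕ)+1 : ℕ) + c := by positivity
      have h5 : ∀ j : ℕ, ‖((j : ℝ) + c) • (ζ : Cn n)‖ = (j : ℝ) + c := by
        intro j
        rw [norm_smul, Real.norm_eq_abs, abs_of_pos (by positivity),
          mem_sphere_zero_iff_norm.mp ζ.2, mul_one]
      rw [h5, h5]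
      push_cast
      field_simp
      ring
  · -- U ∩ Xinf ⊆ N¹∞ U
    rintro p ⟨hpU, hpXinf⟩
    obtain ⟨ζ, t, rfl⟩ := hpXinf
    obtain ⟨hζΓ, htr⟩ := hUinf ζ t hpU
    refine ⟨⟨ζ, t, rfl⟩, ?_⟩
    rintro ⟨-, z, ts, hmem, htend, -⟩
    have h1 : Tendsto (fun k => (Sum.inl (z k) : DE n)) atTop (𝓝 (Sum.inr ζ)) :=
      (continuous_fst.tendsto _).comp htend
    have h2 : Tendsto ts atTop (𝓝 t) := (continuous_snd.tendsto _).comp htend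
    have hpsi : Tendsto (fun k => psiD n (Sum.inl (z k))) atTop
        (𝓝 (psiD n (Sum.inr ζ))) := ((psi_cont n).tendsto _).comp h1
    have hcoe : Tendsto (fun k => (1 + ‖z k‖)⁻¹ • z k) atTop (𝓝 (ζ : Cn n)) :=
      (continuous_subtype_val.tendsto _).comp hpsi
    have hnpos : ∀ k, (0:ℝ) < 1 + ‖z k‖ := fun k => by positivity
    have hq : Tendsto (fun k => (1 + ‖z k‖)⁻¹ * ‖z k‖) atTop (𝓝 1) := by
      have := (continuous_norm.tendsto _).comp hcoe
      rw [mem_sphere_zero_iff_norm.mp ζ.2] at this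
      refine this.congr fun k => ?_
      show ‖(1 + ‖z k‖)⁻¹ • z k‖ = (1 + ‖z k‖)⁻¹ * ‖z k‖
      rw [norm_smul, Real.norm_eq_abs, abs_of_pos (inv_pos.mpr (hnpos k))]
    have hinv : Tendsto (fun k => (1 + ‖z k‖)⁻¹) atTop (𝓝 0) := by
      have h3 : Tendsto (fun k => 1 - (1 + ‖z k‖)⁻¹ * ‖z k‖) atTop (𝓝 (1 - 1)) :=
        tendsto_const_nhds.sub hq
      rw [sub_self] at h3
      refine h3.congr fun k => ?_
      have := hnpos k
      field_simp
      ring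
    have hup : Tendsto (fun k => 1 + ‖z k‖) atTop atTop := by
      have h3 : Tendsto (fun k => (1 + ‖z k‖)⁻¹) atTop (𝓝[>] 0) :=
        tendsto_nhdsWithin_iff.mpr ⟨hinv,
          Eventually.of_forall fun k => inv_pos.mpr (hnpos k)⟩
      have h4 := tendsto_inv_nhdsGT_zero.comp h3
      refine h4.congr fun k => ?_
      simp [inv_inv]
    have ha : Tendsto (fun k => ‖z k‖) atTop atTop := by
      have h3 := tendsto_atTop_add_const_right atTop (-1 : ℝ) hup
      refine h3.congr fun k => by ring
    have hdir : Tendsto (fun k => (‖z k‖)⁻¹ • z k) atTop (𝓝 (ζ : Cn n)) := by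
      have hratio : Tendsto (fun k => (1 + ‖z k‖) * (‖z k‖)⁻¹) atTop (𝓝 1) := by
        have h3 : Tendsto (fun k => (‖z k‖)⁻¹ + 1) atTop (𝓝 (0 + 1)) :=
          ha.inv_tendsto_atTop.add tendsto_const_nhds
        rw [zero_add] at h3
        refine h3.congr' ?_
        filter_upwards [ha.eventually_gt_atTop 0] with k hk
        field_simp
      have h3 := hratio.smul hcoe
      rw [one_smul] at h3
      refine h3.congr' ?_
      filter_upwards [ha.eventually_gt_atTop 0] with k hk
      rw [smul_smul]
      congr 1
      have := hnpos k
      field_simp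
    obtain ⟨V, hVopen, hVeq⟩ := isOpen_induced_iff.mp hΓ
    have hζV : (ζ : Cn n) ∈ V := by
      rw [← hVeq] at hζΓ; exact hζΓ
    have E1 : ∀ᶠ k in atTop, (‖z k‖)⁻¹ • z k ∈ V :=
      hdir.eventually_mem (hVopen.mem_nhds hζV)
    have E2 : ∀ᶠ k in atTop, r < ‖z k‖ := ha.eventually_gt_atTop r
    have E3 : ∀ᶠ k in atTop, ‖ts k‖ < r⁻¹ :=
      h2.eventually_mem ((isOpen_lt continuous_norm continuous_const).mem_nhds htr)
    obtain ⟨k, hk1, hk2, hk3⟩ := (E1.and (E2.and E3)).exists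
    have hkpos : (0:ℝ) < ‖z k‖ := lt_trans hr hk2
    refine (hmem k).2 (Or.inl ⟨Or.inl ⟨⟨(‖z k‖)⁻¹ • z k, ?_⟩, ?_, ‖z k‖,
      hk2, hkpos, ?_⟩, hk3⟩)
    · rw [mem_sphere_zero_iff_norm, norm_smul, Real.norm_eq_abs,
        abs_of_pos (inv_pos.mpr hkpos), inv_mul_cancel₀ (ne_of_gt hkpos)]
    · rw [← hVeq]
      exact hk1
    · show (Sum.inl (z k) : DE n) = Sum.inl (‖z k‖ • ((‖z k‖)⁻¹ • z k))
      rw [smul_inv_smul₀ (ne_of_gt hkpos)]
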